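/- Let G be a connected graph with at least one edge. Then dem(G) = 1 if and only if G is a tree. -/

import Mathlib

open SimpleGraph

/-- A set `M` of vertices is a distance-edge-monitoring set of `G`. -/
def demSet {V : Type*} (G : SimpleGraph V) (M : Set V) : Prop :=
  ∀ e ∈ G.edgeSet, ∃ x ∈ M, ∃ y : V, G.dist x y ≠ (G.deleteEdges {e}).dist x y

/-- The distance-edge-monitoring number of `G`. -/
noncomputable def dem {V : Type*} (G : SimpleGraph V) [Fintype V] : ℕ :=
  sInf {k | ∃ M : Finset V, M.card = k ∧ demSet G ↑M}

namespace DemAux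

open SimpleGraph Walk

variable {V : Type*} {G : SimpleGraph V}

lemma edges_sub_of_not_mem {x y : V} {e : Sym2 V} (W : G.Walk x y) (h : e ∉ W.edges) :
    ∀ f ∈ W.edges, f ∈ (G.deleteEdges {e}).edgeSet := by
  intro f hf
  rw [edgeSet_deleteEdges]
  exact ⟨W.edges_subset_edgeSet hf, fun hfe => h ((Set.mem_singleton_iff.mp hfe) ▸ hf)⟩

lemma walk_split {u v : V} :
    ∀ {a y : V} (W : G.Walk a y), s(u, v) ∈ W.edges →
      (∃ (t : G.Walk a u) (q : G.Walk v y),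
        W.edges = t.edges ++ s(u, v) :: q.edges) ∨
      (∃ (t : G.Walk a v) (q : G.Walk u y),
        W.edges = t.edges ++ s(u, v) :: q.edges) := by
  intro a y W
  induction W with
  | nil => intro h; simp at h
  | cons h W ih =>
    rename_i a b y'
    intro hmem
    by_cases hab : s(a, b) = s(u, v)
    · rw [Sym2.eq_iff] at hab
      rcases hab with ⟨rfl, rfl⟩ | ⟨rfl, rfl⟩
      · exact Or.inl ⟨Walk.nil, W, by simp⟩
      · exact Or.inr ⟨Walk.nil, W, by simp⟩
    · have hmem' : s(u, v) ∈ W.edges := by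
        rw [Walk.edges_cons] at hmem
        rcases List.mem_cons.mp hmem with h' | h'
        · exact absurd h'.symm hab
        · exact h'
      rcases ih hmem' with ⟨t, q, hE⟩ | ⟨t, q, hE⟩
      · exact Or.inl ⟨Walk.cons h t, q, by simp [hE]⟩
      · exact Or.inr ⟨Walk.cons h t, q, by simp [hE]⟩

lemma exists_short_walk [DecidableEq V] {x u v : V} (huv : G.Adj u v)
    (Pu : ∃ P : (G.deleteEdges {s(u, v)}).Walk x u, P.length ≤ G.dist x u)
    (Pv : ∃ P : (G.deleteEdges {s(u, v)}).Walk x v, P.length ≤ G.dist x v) :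
    ∀ (n : ℕ) {y : V} (W : G.Walk x y), W.edges.count s(u, v) ≤ n →
      ∃ W' : (G.deleteEdges {s(u, v)}).Walk x y, W'.length ≤ W.length := by
  intro n
  induction n with
  | zero =>
    intro y W hc
    have hne : s(u, v) ∉ W.edges := by
      rw [Nat.le_zero, List.count_eq_zero] at hc; exact hc
    exact ⟨W.transfer _ (edges_sub_of_not_mem W hne),
      le_of_eq (W.length_transfer _)⟩
  | succ n ih =>
    intro y W hc
    by_cases hmem : s(u, v) ∈ W.edges
    · rcases walk_split W hmem with ⟨t, q, hE⟩ | ⟨t, q, hE⟩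
      · obtain ⟨P, hP⟩ := Pv
        have hPsub : ∀ f ∈ P.edges, f ∈ G.edgeSet := fun f hf => by
          have := P.edges_subset_edgeSet hf
          rw [edgeSet_deleteEdges] at this
          exact this.1
        have hPe : s(u, v) ∉ P.edges := fun hf => by
          have := P.edges_subset_edgeSet hf
          rw [edgeSet_deleteEdges] at this
          exact this.2 rfl
        have hcq : q.edges.count s(u, v) ≤ n := by
          rw [hE] at hc
          rw [List.count_append, List.count_cons_self] at hc
          omega
        have hcW2 : ((P.transfer G hPsub).append q).edges.count s(u, v) ≤ n := by
          rw [Walk.edges_append, List.count_append, Walk.edges_transfer,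
            List.count_eq_zero.mpr hPe]
          omega
        obtain ⟨W', hW'⟩ := ih ((P.transfer G hPsub).append q) hcW2
        refine ⟨W', le_trans hW' ?_⟩
        have hlen : W.length = t.length + 1 + q.length := by
          have := congrArg List.length hE
          simp only [Walk.length_edges, List.length_append, List.length_cons] at this
          omega
        have hdv : G.dist x v ≤ t.length + 1 := by
          have := G.dist_le (t.concat huv)
          rwa [Walk.length_concat] at this
        have hW2len : ((P.transfer G hPsub).append q).length = P.length + q.length := by
          rw [Walk.length_append, Walk.length_transfer]
        omega
      · obtain ⟨P, hP⟩ := Pu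
        have hPsub : ∀ f ∈ P.edges, f ∈ G.edgeSet := fun f hf => by
          have := P.edges_subset_edgeSet hf
          rw [edgeSet_deleteEdges] at this
          exact this.1
        have hPe : s(u, v) ∉ P.edges := fun hf => by
          have := P.edges_subset_edgeSet hf
          rw [edgeSet_deleteEdges] at this
          exact this.2 rfl
        have hcq : q.edges.count s(u, v) ≤ n := by
          rw [hE] at hc
          rw [List.count_append, List.count_cons_self] at hc
          omega
        have hcW2 : ((P.transfer G hPsub).append q).edges.count s(u, v) ≤ n := by
          rw [Walk.edges_append, List.count_append, Walk.edges_transfer,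
            List.count_eq_zero.mpr hPe]
          omega
        obtain ⟨W', hW'⟩ := ih ((P.transfer G hPsub).append q) hcW2
        refine ⟨W', le_trans hW' ?_⟩
        have hlen : W.length = t.length + 1 + q.length := by
          have := congrArg List.length hE
          simp only [Walk.length_edges, List.length_append, List.length_cons] at this
          omega
        have hdu : G.dist x u ≤ t.length + 1 := by
          have := G.dist_le (t.concat huv.symm)
          rwa [Walk.length_concat] at this
        have hW2len : ((P.transfer G hPsub).append q).length = P.length + q.length := by
          rw [Walk.length_append, Walk.length_transfer]
        omega
    · exact ⟨W.transfer _ (edges_sub_of_not_mem W hmem),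
        le_of_eq (W.length_transfer _)⟩

lemma dist_preserved [DecidableEq V] (hG : G.Connected) {x u v : V} (huv : G.Adj u v)
    (Pu : ∃ P : (G.deleteEdges {s(u, v)}).Walk x u, P.length ≤ G.dist x u)
    (Pv : ∃ P : (G.deleteEdges {s(u, v)}).Walk x v, P.length ≤ G.dist x v) (y : V) :
    G.dist x y = (G.deleteEdges {s(u, v)}).dist x y := by
  obtain ⟨W, hW⟩ := (hG x y).exists_walk_length_eq_dist
  obtain ⟨W', hW'⟩ := exists_short_walk huv Pu Pv (W.edges.count s(u, v)) W le_rfl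
  have h1 : (G.deleteEdges {s(u, v)}).dist x y ≤ G.dist x y :=
    le_trans (dist_le W') (hW ▸ hW')
  have h2 : G.dist x y ≤ (G.deleteEdges {s(u, v)}).dist x y := by
    obtain ⟨P, hP⟩ := W'.reachable.exists_walk_length_eq_dist
    have hPsub : ∀ f ∈ P.edges, f ∈ G.edgeSet := fun f hf => by
      have := P.edges_subset_edgeSet hf
      rw [edgeSet_deleteEdges] at this
      exact this.1
    calc G.dist x y ≤ (P.transfer G hPsub).length := G.dist_le _
      _ = P.length := P.length_transfer _
      _ = _ := hP
  omega

lemma exists_other_edge_of_cycle_from {v : V} {d : G.Walk v v} (hd : d.IsCycle)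
    (e : Sym2 V) :
    ∃ w, G.Adj v w ∧ s(v, w) ∈ d.edges ∧ s(v, w) ≠ e := by
  cases d with
  | nil => exact absurd rfl hd.ne_nil
  | cons h q =>
    rename_i b
    by_cases hbe : s(v, b) = e
    · have hq3 : 3 ≤ (Walk.cons h q).length := hd.three_le_length
      have hnodup : q.support.Nodup := by
        have := hd.support_nodup
        simpa [Walk.support_cons] using this
      have hnodup' : q.reverse.support.Nodup := by
        rw [Walk.support_reverse]
        exact List.nodup_reverse.mpr hnodup
      cases hq : q.reverse with
      | nil => exact absurd h (G.loopless.irrefl v)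
      | cons h' q'' =>
        rename_i w'
        have hwb : w' ≠ b := by
          intro heq
          subst heq
          cases q'' with
          | nil =>
            have hq1 : q.length = 1 := by
              have := congrArg Walk.length hq
              simpa [Walk.length_reverse] using this
            rw [Walk.length_cons, hq1] at hq3
            omega
          | cons h2 q3 =>
            have hb : w' ∈ q3.support := q3.end_mem_support
            rw [hq] at hnodup'
            simp only [Walk.support_cons, List.nodup_cons, List.mem_cons] at hnodup'
            exact hnodup'.2.1 hb
        refine ⟨w', h', ?_, ?_⟩
        · have h1 : s(v, w') ∈ q.reverse.edges := by
            rw [hq, Walk.edges_cons]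
            exact List.mem_cons_self
          rw [Walk.edges_reverse, List.mem_reverse] at h1
          rw [Walk.edges_cons]
          exact List.mem_cons_of_mem _ h1
        · rw [← hbe]
          intro hcon
          rw [Sym2.eq_iff] at hcon
          rcases hcon with ⟨-, hwb'⟩ | ⟨hvb, -⟩
          · exact hwb hwb'
          · exact h.ne hvb
    · exact ⟨b, h, by rw [Walk.edges_cons]; exact List.mem_cons_self, hbe⟩

lemma exists_short_to_endpoint [DecidableEq V] (hG : G.Connected) {x u v a : V} {c : G.Walk a a}
    (hc : c.IsCycle) (huv : G.Adj u v) (hmem : s(u, v) ∈ c.edges)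
    (hmax : ∀ p q : V, s(p, q) ∈ c.edges →
      G.dist x p + G.dist x q ≤ G.dist x u + G.dist x v) :
    ∃ P : (G.deleteEdges {s(u, v)}).Walk x v, P.length ≤ G.dist x v := by
  obtain ⟨p, hp⟩ := (hG x v).exists_walk_length_eq_dist
  by_cases hep : s(u, v) ∈ p.edges
  · have hv : v ∈ c.support := c.snd_mem_support_of_mem_edges hmem
    obtain ⟨w, hw, hwc', hwe⟩ := exists_other_edge_of_cycle_from (hc.rotate hv) (s(u, v))
    have hwc : s(v, w) ∈ c.edges := (c.rotate_edges v hv).mem_iff.mp hwc'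
    have hu : u ∈ p.support := p.fst_mem_support_of_mem_edges hep
    have h1 : G.dist x u ≤ (p.takeUntil u hu).length := G.dist_le _
    have h2 : (p.takeUntil u hu).length + (p.dropUntil u hu).length = p.length := by
      have := congrArg Walk.length (p.take_spec hu)
      rwa [Walk.length_append] at this
    have h3 : 1 ≤ (p.dropUntil u hu).length := by
      rcases Nat.eq_zero_or_pos (p.dropUntil u hu).length with h0 | h0
      · exact absurd (Walk.eq_of_length_eq_zero h0) huv.ne
      · exact h0
    have hxu : G.dist x u + 1 ≤ G.dist x v := by omega
    have hxw : G.dist x w ≤ G.dist x u := by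
      have := hmax v w hwc
      omega
    obtain ⟨r, hr⟩ := (hG x w).exists_walk_length_eq_dist
    have her : s(u, v) ∉ r.edges := by
      intro hcon
      have hvr : v ∈ r.support := r.snd_mem_support_of_mem_edges hcon
      have h4 : G.dist x v ≤ (r.takeUntil v hvr).length := G.dist_le _
      have h5 : (r.takeUntil v hvr).length + (r.dropUntil v hvr).length = r.length := by
        have := congrArg Walk.length (r.take_spec hvr)
        rwa [Walk.length_append] at this
      have h6 : 1 ≤ (r.dropUntil v hvr).length := by
        rcases Nat.eq_zero_or_pos (r.dropUntil v hvr).length with h0 | h0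
        · exact absurd (Walk.eq_of_length_eq_zero h0) hw.ne
        · exact h0
      omega
    have hadj : (G.deleteEdges {s(u, v)}).Adj w v := by
      rw [deleteEdges_adj]
      refine ⟨hw.symm, fun hcon => hwe ?_⟩
      rw [Set.mem_singleton_iff] at hcon
      rw [← hcon, Sym2.eq_swap]
    refine ⟨(r.transfer _ (edges_sub_of_not_mem r her)).concat hadj, ?_⟩
    rw [Walk.length_concat, Walk.length_transfer, hr]
    omega
  · exact ⟨p.transfer _ (edges_sub_of_not_mem p hep), le_of_eq (by rw [Walk.length_transfer, hp])⟩

end DemAux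

theorem stmt_8 {V : Type*} [Fintype V] (G : SimpleGraph V) (hG : G.Connected)
    (he : G.edgeSet.Nonempty) :
    dem G = 1 ↔ G.IsTree := by
  classical
  constructor
  · intro hdem
    refine ⟨hG, ?_⟩
    by_contra hcyc
    unfold SimpleGraph.IsAcyclic at hcyc
    push_neg at hcyc
    obtain ⟨a, c, hc⟩ := hcyc
    -- extract the monitoring vertex
    have hS : {k | ∃ M : Finset V, M.card = k ∧ demSet G ↑M}.Nonempty := by
      by_contra h
      rw [Set.not_nonempty_iff_eq_empty] at h
      rw [dem, h, Nat.sInf_empty] at hdem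
      exact one_ne_zero hdem.symm
    have h1 : 1 ∈ {k | ∃ M : Finset V, M.card = k ∧ demSet G ↑M} :=
      hdem ▸ Nat.sInf_mem hS
    obtain ⟨M, hM1, hMd⟩ := h1
    obtain ⟨x, rfl⟩ := Finset.card_eq_one.mp hM1
    -- pick the edge of the cycle maximizing the distance sum from x
    have hne : c.edges.toFinset.Nonempty := by
      rw [List.toFinset_nonempty_iff]
      apply List.ne_nil_of_length_pos
      rw [Walk.length_edges]
      have := hc.three_le_length
      omega
    obtain ⟨e, heF, hemax⟩ := c.edges.toFinset.exists_max_image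
      (Sym2.lift ⟨fun p q => G.dist x p + G.dist x q, fun p q => add_comm _ _⟩) hne
    obtain ⟨u, v, rfl⟩ : ∃ u v, e = s(u, v) := Sym2.ind (fun u v => ⟨u, v, rfl⟩) e
    have hmemc : s(u, v) ∈ c.edges := List.mem_toFinset.mp heF
    have huv : G.Adj u v := c.edges_subset_edgeSet hmemc
    have hmax : ∀ p q : V, s(p, q) ∈ c.edges →
        G.dist x p + G.dist x q ≤ G.dist x u + G.dist x v := by
      intro p q hpq
      have := hemax s(p, q) (List.mem_toFinset.mpr hpq)
      simpa using this
    have Pv := DemAux.exists_short_to_endpoint hG hc huv hmemc hmax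
    have Pu : ∃ P : (G.deleteEdges {s(u, v)}).Walk x u, P.length ≤ G.dist x u := by
      have hmax' : ∀ p q : V, s(p, q) ∈ c.edges →
          G.dist x p + G.dist x q ≤ G.dist x v + G.dist x u := by
        intro p q hpq
        rw [add_comm (G.dist x v)]
        exact hmax p q hpq
      have hmemc' : s(v, u) ∈ c.edges := by rwa [Sym2.eq_swap]
      have := DemAux.exists_short_to_endpoint hG hc huv.symm hmemc' hmax'
      rwa [show s(v, u) = s(u, v) from Sym2.eq_swap] at this
    obtain ⟨x', hx', y, hy⟩ := hMd s(u, v) huv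
    have hxx : x' = x := by simpa using hx'
    subst hxx
    exact hy (DemAux.dist_preserved hG huv Pu Pv y)
  · intro hT
    obtain ⟨x⟩ := hG.nonempty
    have hdem1 : demSet G ↑({x} : Finset V) := by
      intro e hee
      obtain ⟨u, v, rfl⟩ : ∃ u v, e = s(u, v) := Sym2.ind (fun u v => ⟨u, v, rfl⟩) e
      have huv : G.Adj u v := hee
      have hbr : G.IsBridge s(u, v) :=
        (SimpleGraph.isAcyclic_iff_forall_edge_isBridge.mp hT.2) hee
      have hnr : ¬(G.deleteEdges {s(u, v)}).Reachable u v :=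
        SimpleGraph.isBridge_iff.mp hbr
      have hcase : ¬(G.deleteEdges {s(u, v)}).Reachable x u ∨
          ¬(G.deleteEdges {s(u, v)}).Reachable x v := by
        by_contra h
        push_neg at h
        exact hnr (h.1.symm.trans h.2)
      have key : ∀ y : V, ¬(G.deleteEdges {s(u, v)}).Reachable x y →
          G.dist x y ≠ (G.deleteEdges {s(u, v)}).dist x y := by
        intro y hnreach
        have hxy : x ≠ y := fun h => hnreach (h ▸ Reachable.refl x)
        have h1 : G.dist x y ≠ 0 := (hG.pos_dist_of_ne hxy).ne'
        have h2 : (G.deleteEdges {s(u, v)}).dist x y = 0 :=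
          SimpleGraph.dist_eq_zero_of_not_reachable hnreach
        rw [h2]
        exact h1
      rcases hcase with hcx | hcx
      · exact ⟨x, by simp, u, key u hcx⟩
      · exact ⟨x, by simp, v, key v hcx⟩
    have h1mem : 1 ∈ {k | ∃ M : Finset V, M.card = k ∧ demSet G ↑M} :=
      ⟨{x}, Finset.card_singleton x, hdem1⟩
    have h0 : 0 ∉ {k | ∃ M : Finset V, M.card = k ∧ demSet G ↑M} := by
      rintro ⟨M, hM0, hMd⟩
      rw [Finset.card_eq_zero] at hM0
      subst hM0
      obtain ⟨e, hee⟩ := he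
      obtain ⟨z, hz, -⟩ := hMd e hee
      simp at hz
    rw [dem]
    have hle := Nat.sInf_le h1mem
    have hne0 : sInf {k | ∃ M : Finset V, M.card = k ∧ demSet G ↑M} ≠ 0 :=
      fun h => h0 (h ▸ Nat.sInf_mem ⟨1, h1mem⟩)
    omega
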